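/- A monotone linear operator A : ℝ² → ℝ² is paramonotone if and only if A is strictly monotone or A is symmetric (equal to its transpose). -/

import Mathlib

open Matrix

/-- Key lemma: if the quadratic form of a monotone matrix vanishes at `z`, then the
bilinear form `z ⬝ A w + w ⬝ A z` vanishes for every `w`. -/
lemma key_bilinear (A : Matrix (Fin 2) (Fin 2) ℝ)
    (hmono : ∀ x : Fin 2 → ℝ, (0:ℝ) ≤ x ⬝ᵥ A.mulVec x)
    (z : Fin 2 → ℝ) (hz : z ⬝ᵥ A.mulVec z = 0) (w : Fin 2 → ℝ) :
    z ⬝ᵥ A.mulVec w + w ⬝ᵥ A.mulVec z = 0 := by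
  have hv : 0 ≤ w ⬝ᵥ A.mulVec w := hmono w
  set u : ℝ := z ⬝ᵥ A.mulVec w + w ⬝ᵥ A.mulVec z with hu
  set v : ℝ := w ⬝ᵥ A.mulVec w with hvdef
  have hv1 : (0:ℝ) < v + 1 := by linarith
  have ht' : ∀ t : ℝ, 0 ≤ t * u + t ^ 2 * v := by
    intro t
    have h := hmono (z + t • w)
    simp only [mulVec_add, mulVec_smul, dotProduct_add, add_dotProduct,
      dotProduct_smul, smul_dotProduct, smul_eq_mul] at h
    rw [hz] at h
    rw [hu, hvdef]
    nlinarith [h]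
  have h2 := ht' (-u / (v + 1))
  have hq : u ^ 2 ≤ 0 := by
    have hne : v + 1 ≠ 0 := ne_of_gt hv1
    field_simp at h2
    nlinarith [h2, hv1, sq_nonneg u]
  have : u ^ 2 = 0 := le_antisymm hq (sq_nonneg u)
  exact pow_eq_zero_iff (two_ne_zero) |>.mp this

theorem paramonotone_iff_strict_or_symmetric_R2
    (A : Matrix (Fin 2) (Fin 2) ℝ)
    (hmono : ∀ x : Fin 2 → ℝ, (0:ℝ) ≤ x ⬝ᵥ A.mulVec x) :
    (∀ x y : Fin 2 → ℝ, (x - y) ⬝ᵥ (A.mulVec x - A.mulVec y) = 0 →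
        A.mulVec x = A.mulVec y) ↔
    ((∀ x y : Fin 2 → ℝ, (x - y) ⬝ᵥ (A.mulVec x - A.mulVec y) = 0 → x = y) ∨
      A = Aᵀ) := by
  constructor
  · intro hpara
    by_cases hstrict : ∀ x y : Fin 2 → ℝ,
        (x - y) ⬝ᵥ (A.mulVec x - A.mulVec y) = 0 → x = y
    · exact Or.inl hstrict
    · right
      push_neg at hstrict
      obtain ⟨x, y, hxy, hne⟩ := hstrict
      set z : Fin 2 → ℝ := x - y with hzdef
      have hAz : A.mulVec z = 0 := by
        have := hpara x y hxy
        rw [hzdef, mulVec_sub, this, sub_self]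
      have hz0 : z ⬝ᵥ A.mulVec z = 0 := by rw [hAz, dotProduct_zero]
      have hzne : z ≠ 0 := sub_ne_zero_of_ne hne
      have hbil : ∀ w, z ⬝ᵥ A.mulVec w = 0 := by
        intro w
        have := key_bilinear A hmono z hz0 w
        rw [hAz, dotProduct_zero, add_zero] at this
        exact this
      -- extract component equations
      have e0 : A 0 0 * z 0 + A 0 1 * z 1 = 0 := by
        have := congrFun hAz 0
        simpa [mulVec, dotProduct, Fin.sum_univ_two] using this
      have e1 : A 1 0 * z 0 + A 1 1 * z 1 = 0 := by
        have := congrFun hAz 1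
        simpa [mulVec, dotProduct, Fin.sum_univ_two] using this
      have f0 : z 0 * A 0 0 + z 1 * A 1 0 = 0 := by
        have := hbil (fun i => if i = 0 then 1 else 0)
        simpa [dotProduct, mulVec, Fin.sum_univ_two] using this
      have f1 : z 0 * A 0 1 + z 1 * A 1 1 = 0 := by
        have := hbil (fun i => if i = 1 then 1 else 0)
        simpa [dotProduct, mulVec, Fin.sum_univ_two] using this
      have hz01 : z 0 ≠ 0 ∨ z 1 ≠ 0 := by
        by_contra h
        push_neg at h
        apply hzne
        funext i
        fin_cases i
        · exact h.1
        · exact h.2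
      have hbc : A 0 1 = A 1 0 := by
        rcases hz01 with h | h
        · have : (A 1 0 - A 0 1) * z 0 = 0 := by nlinarith [e1, f1]
          have := mul_eq_zero.mp this
          rcases this with h' | h'
          · linarith [sub_eq_zero.mp h']
          · exact absurd h' h
        · have : (A 0 1 - A 1 0) * z 1 = 0 := by nlinarith [e0, f0]
          have := mul_eq_zero.mp this
          rcases this with h' | h'
          · linarith [sub_eq_zero.mp h']
          · exact absurd h' h
      ext i j
      fin_cases i <;> fin_cases j <;>
        simp [transpose_apply, hbc]
  · rintro (hstrict | hsym) x y h
    · rw [hstrict x y h]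
    · set z : Fin 2 → ℝ := x - y with hzdef
      have hz0 : z ⬝ᵥ A.mulVec z = 0 := by
        rw [hzdef, mulVec_sub]; exact h
      have hbil := key_bilinear A hmono z hz0 (A.mulVec z)
      have hsymdot : z ⬝ᵥ A.mulVec (A.mulVec z) = A.mulVec z ⬝ᵥ A.mulVec z := by
        rw [dotProduct_mulVec, ← mulVec_transpose, ← hsym]
      rw [hsymdot] at hbil
      have : A.mulVec z ⬝ᵥ A.mulVec z = 0 := by linarith
      have hAz : A.mulVec z = 0 := by
        rwa [dotProduct_self_eq_zero] at this
      rw [hzdef, mulVec_sub] at hAz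
      exact sub_eq_zero.mp hAz
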